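/- In the broadside holographic setting with y₀ = 0, the quantity γ₁ = (1/(4 z₀² χ₂²)) (5χ₂ - (L² + z₀²)^{-1})(χ₂ + (L² + z₀²)^{-1}) is strictly positive, where χ₂ = arctan(L/z₀)/(L z₀), L > 0, z₀ > 0. -/

import Mathlib

/-- Key inequality: `(1 + t²) * arctan t > t` for `t > 0`. -/
lemma arctan_key (t : ℝ) (ht : 0 < t) : t < (1 + t ^ 2) * Real.arctan t := by
  set θ := Real.arctan t with hθ
  have hθpos : 0 < θ := by
    rw [hθ, ← Real.arctan_zero]; exact Real.arctan_strictMono ht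
  have hcos : 0 < Real.cos θ := Real.cos_arctan_pos t
  have htan : Real.tan θ = t := Real.tan_arctan t
  have hsin : Real.sin (2 * θ) < 2 * θ := Real.sin_lt (by linarith)
  rw [Real.sin_two_mul] at hsin
  have hkey : Real.sin θ * Real.cos θ < θ := by linarith
  have hpyth := Real.sin_sq_add_cos_sq θ
  rw [← htan, Real.tan_eq_sin_div_cos]
  rw [div_lt_iff₀ hcos, div_pow]
  have hc2 : (0:ℝ) < Real.cos θ ^ 2 := by positivity
  have : (1 + Real.sin θ ^ 2 / Real.cos θ ^ 2) = 1 / Real.cos θ ^ 2 := by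
    field_simp
    linarith
  rw [this]
  rw [one_div, inv_mul_eq_div, div_mul_eq_mul_div, lt_div_iff₀ hc2]
  nlinarith [mul_pos hcos hcos]

/-- Positivity of `γ₁` in the broadside holographic setting (`y₀ = 0`). -/
theorem gamma1_broadside_pos (L z₀ χ₂ : ℝ) (hL : 0 < L) (hz : 0 < z₀)
    (hχ₂ : χ₂ = Real.arctan (L / z₀) / (L * z₀)) :
    0 < (1 / (4 * z₀ ^ 2 * χ₂ ^ 2)) * (5 * χ₂ - (L ^ 2 + z₀ ^ 2)⁻¹) *
        (χ₂ + (L ^ 2 + z₀ ^ 2)⁻¹) := by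
  have ht : 0 < L / z₀ := by positivity
  have harctan : 0 < Real.arctan (L / z₀) := by
    rw [← Real.arctan_zero]; exact Real.arctan_strictMono ht
  have hχpos : 0 < χ₂ := by rw [hχ₂]; positivity
  have hsum : 0 < L ^ 2 + z₀ ^ 2 := by positivity
  have hkey := arctan_key (L / z₀) ht
  have hgt : 1 < χ₂ * (L ^ 2 + z₀ ^ 2) := by
    rw [hχ₂, div_mul_eq_mul_div, lt_div_iff₀ (by positivity)]
    have h1 : (1 + (L / z₀) ^ 2) * z₀ ^ 2 = L ^ 2 + z₀ ^ 2 := by field_simp; ring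
    have h2 : L / z₀ * z₀ = L := by field_simp
    nlinarith [mul_lt_mul_of_pos_right hkey (sq_pos_of_pos hz)]
  have hinv : (L ^ 2 + z₀ ^ 2)⁻¹ < χ₂ := by
    rw [inv_lt_iff_one_lt_mul₀ hsum]
    linarith
  have hinvpos : 0 < (L ^ 2 + z₀ ^ 2)⁻¹ := by positivity
  have f1 : 0 < 1 / (4 * z₀ ^ 2 * χ₂ ^ 2) := by positivity
  have f2 : 0 < 5 * χ₂ - (L ^ 2 + z₀ ^ 2)⁻¹ := by linarith
  have f3 : 0 < χ₂ + (L ^ 2 + z₀ ^ 2)⁻¹ := by linarith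
  positivity
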